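/- Let λ ≠ 0, k ≠ 0, and ε be real constants. The function u(x,t) = (−λ² k² ε x e^{−λ k t}/(1 + λ ε k e^{−λ k t}))^{1/k} satisfies u_t + u^k·u_x + λ·u = 0 at every point (x,t) at which 1 + λ ε k e^{−λ k t} ≠ 0 and the base −λ² k² ε x e^{−λ k t}/(1 + λ ε k e^{−λ k t}) is positive. -/

import Mathlib

open Real

/-- the function
`u(x,t) = (−λ²k²ε x e^{−λkt}/(1 + λεk e^{−λkt}))^{1/k}` satisfies
`u_t + u^k·u_x + λ·u = 0` at every point at which `1 + λεk e^{−λkt} ≠ 0` and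
the base `−λ²k²ε x e^{−λkt}/(1 + λεk e^{−λkt})` is positive. -/
theorem case7_G8_invariant_solution
    (lam k ε : ℝ) (hlam : lam ≠ 0) (hk : k ≠ 0) :
    ∀ u : ℝ × ℝ → ℝ,
      u = (fun p : ℝ × ℝ =>
        (-(lam ^ 2 * k ^ 2 * ε * p.1 * exp (-(lam * k * p.2)))
          / (1 + lam * ε * k * exp (-(lam * k * p.2)))) ^ (1 / k)) →
      ∀ x t : ℝ,
        1 + lam * ε * k * exp (-(lam * k * t)) ≠ 0 →
        0 < -(lam ^ 2 * k ^ 2 * ε * x * exp (-(lam * k * t)))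
              / (1 + lam * ε * k * exp (-(lam * k * t))) →
        fderiv ℝ u (x, t) (0, 1) + u (x, t) ^ k * fderiv ℝ u (x, t) (1, 0)
          + lam * u (x, t) = 0 := by
  intro u hu x t hD hpos
  subst hu
  have hφ : HasDerivAt (fun s : ℝ => exp (-(lam * k * s)))
      (exp (-(lam * k * t)) * -(lam * k)) t := by
    have h1 : HasDerivAt (fun s : ℝ => -(lam * k * s)) (-(lam * k)) t := by
      simpa using ((hasDerivAt_id t).const_mul (lam * k)).fun_neg
    simpa [mul_comm] using h1.exp
  have hΦ : HasFDerivAt (fun p : ℝ × ℝ => exp (-(lam * k * p.2)))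
      ((exp (-(lam * k * t)) * -(lam * k)) • (ContinuousLinearMap.snd ℝ ℝ ℝ)) (x, t) :=
    by have := hφ.comp_hasFDerivAt (f := Prod.snd) (x, t) (hasFDerivAt_snd (𝕜 := ℝ) (E := ℝ) (F := ℝ) (p := (x, t))); exact this
  have hN := (((hasFDerivAt_fst.const_mul (lam ^ 2 * k ^ 2 * ε)).fun_mul hΦ)).fun_neg
  have hDen : HasFDerivAt (fun p : ℝ × ℝ => 1 + lam * ε * k * exp (-(lam * k * p.2)))
      ((lam * ε * k) • ((exp (-(lam * k * t)) * -(lam * k)) •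
        (ContinuousLinearMap.snd ℝ ℝ ℝ))) (x, t) := by
    simpa using (hasFDerivAt_const (1 : ℝ) (x, t)).fun_add (hΦ.const_mul (lam * ε * k))
  have hInv := (hasDerivAt_inv hD).comp_hasFDerivAt (x, t) hDen
  have hf := hN.fun_mul hInv
  have hpos' : 0 < -(lam ^ 2 * k ^ 2 * ε * x * exp (-(lam * k * t)))
      * (1 + lam * ε * k * exp (-(lam * k * t)))⁻¹ := by
    simpa [div_eq_mul_inv] using hpos
  have hu := hf.rpow_const (p := 1 / k) (Or.inl (ne_of_gt hpos'))
  simp only [Function.comp, ← div_eq_mul_inv] at hu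
  rw [hu.fderiv]
  simp only [ContinuousLinearMap.smul_apply, ContinuousLinearMap.add_apply,
    ContinuousLinearMap.neg_apply, ContinuousLinearMap.coe_fst', ContinuousLinearMap.coe_snd',
    smul_eq_mul]
  set E : ℝ := rexp (-(lam * k * t)) with hEdef
  set D : ℝ := 1 + lam * ε * k * E with hDdef
  set N : ℝ := -(lam ^ 2 * k ^ 2 * ε * x * E) with hNdef
  have hposND : 0 < N / D := hpos
  have hNne : N ≠ 0 := by
    intro h
    rw [h, zero_div] at hposND
    exact lt_irrefl 0 hposND
  have hQk : ((N / D) ^ (1 / k)) ^ k = N / D := by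
    rw [← Real.rpow_mul hposND.le, one_div, inv_mul_cancel₀ hk, Real.rpow_one]
  have hQ1 : (N / D) ^ (1 / k - 1) = (N / D) ^ (1 / k) / (N / D) := by
    rw [Real.rpow_sub hposND, Real.rpow_one]
  rw [hQk, hQ1]
  set Q : ℝ := (N / D) ^ (1 / k) with hQdef
  have hEne : E ≠ 0 := (exp_pos _).ne'
  rw [hNdef, hDdef]
  have hDne : (1 + lam * ε * k * E) ≠ 0 := hD
  have hNne' : -(lam ^ 2 * k ^ 2 * ε * x * E) ≠ 0 := hNne
  have hxne : x ≠ 0 := by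
    intro h; apply hNne'; rw [h]; ring
  have hεne : ε ≠ 0 := by
    intro h; apply hNne'; rw [h]; ring
  have hDne2 : 1 + k * lam * ε * E ≠ 0 := by
    convert hDne using 2; ring
  field_simp
  ring
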